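/- Let (P,≤) be a poset and S, T ⊆ P antichains such that s < t for all s ∈ S, t ∈ T, and S ∪ T ≠ ∅. Then there exists a rotation R_{A,C} of (P,≤) such that the set of maximal elements of R_{A,C}(P,≤) is exactly S ∪ T. -/

import Mathlib

universe u

variable {P : Type u}

/-- `A` is a downset (downward closed set) w.r.t. the relation `le`. -/
def IsDownset (le : P → P → Prop) (A : Set P) : Prop :=
  ∀ ⦃x⦄, x ∈ A → ∀ ⦃y⦄, le y x → y ∈ A

/-- `C` is an upset (upward closed set) w.r.t. the relation `le`. -/
def IsUpset (le : P → P → Prop) (C : Set P) : Prop :=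
  ∀ ⦃x⦄, x ∈ C → ∀ ⦃y⦄, le x y → y ∈ C

/-- `x` and `y` are incomparable w.r.t. `le`. -/
def Incomp (le : P → P → Prop) (x y : P) : Prop := ¬ le x y ∧ ¬ le y x

/-- Strictly less: `le x y` and `x ≠ y`. -/
def SLT (le : P → P → Prop) (x y : P) : Prop := le x y ∧ x ≠ y

/-- The conditions under which the rotation `R_{A,C}` is defined:
`A`, `C` disjoint, `A` a downset, `C` an upset, and every element of `A`
strictly below every element of `C`. -/
def RotOK (le : P → P → Prop) (A C : Set P) : Prop :=
  Disjoint A C ∧ IsDownset le A ∧ IsUpset le C ∧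
    ∀ a ∈ A, ∀ c ∈ C, le a c ∧ a ≠ c

/-- The rotation `R_{A,C}` of the relation `le`; the middle block `B` is the
complement of `A ∪ C`. -/
def Rot (le : P → P → Prop) (A C : Set P) : P → P → Prop := fun x y =>
  (((x ∈ A ∧ y ∈ A) ∨ (x ∉ A ∧ x ∉ C ∧ y ∉ A ∧ y ∉ C) ∨ (x ∈ C ∧ y ∈ C)) ∧ le x y) ∨
  (x ∉ A ∧ x ∉ C ∧ y ∈ A ∧ Incomp le x y) ∨
  (x ∈ C ∧ y ∈ A) ∨
  (x ∈ C ∧ y ∉ A ∧ y ∉ C ∧ Incomp le x y)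

/-- One rotation step between two relations on the same domain. -/
def RotStep (le le' : P → P → Prop) : Prop :=
  ∃ A C, RotOK le A C ∧ le' = Rot le A C

/-- Rotation-equivalence: the reflexive-transitive closure of rotation steps. -/
def RotEquiv (le le' : P → P → Prop) : Prop :=
  Relation.ReflTransGen RotStep le le'

/-- Restriction of a relation to a subset (as a relation on the subtype). -/
def restrictRel (le : P → P → Prop) (S : Set P) : S → S → Prop :=
  fun x y => le x.1 y.1

/-- The set of maximal elements of a relation. -/
def maxSet (le : P → P → Prop) : Set P := {x | ∀ y, le x y → y = x}

/-- The rotation class `O₂` of a three element poset `{a,b,c}`: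
chains `a<b<c`, `b<c<a`, `c<a<b`, and the posets with single comparability
`a<b`, `b<c`, `c<a`. -/
def O2rel (le : P → P → Prop) (a b c : P) : Prop :=
  (SLT le a b ∧ SLT le b c) ∨ (SLT le b c ∧ SLT le c a) ∨ (SLT le c a ∧ SLT le a b) ∨
  (SLT le a b ∧ Incomp le a c ∧ Incomp le b c) ∨
  (SLT le b c ∧ Incomp le b a ∧ Incomp le c a) ∨
  (SLT le c a ∧ Incomp le c b ∧ Incomp le a b)

/-- The rotation class `O₃`: the dual of `O₂`. -/
def O3rel (le : P → P → Prop) (a b c : P) : Prop := O2rel le c b a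

/-- The rotation class `O₁`: the antichain together with the `V` and `Λ` shaped
three element posets. -/
def O1rel (le : P → P → Prop) (a b c : P) : Prop :=
  (Incomp le a b ∧ Incomp le b c ∧ Incomp le a c) ∨
  (SLT le a b ∧ SLT le a c ∧ Incomp le b c) ∨
  (SLT le b a ∧ SLT le b c ∧ Incomp le a c) ∨
  (SLT le c a ∧ SLT le c b ∧ Incomp le a b) ∨
  (SLT le b a ∧ SLT le c a ∧ Incomp le b c) ∨
  (SLT le a b ∧ SLT le c b ∧ Incomp le a c) ∨
  (SLT le a c ∧ SLT le b c ∧ Incomp le a b)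

/-- The extension property (EXT) characterizing the random poset: every
one-point extension of a finite subposet is realized by some element. -/
def ExtProp (le : P → P → Prop) : Prop :=
  ∀ Q : Set P, Q.Finite → ∀ D U : Set P, D ⊆ Q → U ⊆ Q → Disjoint D U →
    (∀ x ∈ Q, ∀ d ∈ D, le x d → x ∈ D) →
    (∀ x ∈ Q, ∀ u ∈ U, le u x → x ∈ U) →
    (∀ d ∈ D, ∀ u ∈ U, le d u ∧ d ≠ u) →
    ∃ s, s ∉ Q ∧ (∀ d ∈ D, le d s ∧ d ≠ s) ∧ (∀ u ∈ U, le s u ∧ s ≠ u) ∧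
      ∀ x ∈ Q, x ∉ D → x ∉ U → Incomp le s x


theorem stmt12 (le : P → P → Prop) [IsPartialOrder P le]
    (S T : Set P)
    (hS : ∀ x ∈ S, ∀ y ∈ S, x ≠ y → Incomp le x y)
    (hT : ∀ x ∈ T, ∀ y ∈ T, x ≠ y → Incomp le x y)
    (hST : ∀ s ∈ S, ∀ t ∈ T, le s t ∧ s ≠ t)
    (hne : (S ∪ T).Nonempty) :
    ∃ A C : Set P, RotOK le A C ∧ maxSet (Rot le A C) = S ∪ T := by
  classical
  have hrefl : ∀ x : P, le x x := fun x => refl_of le x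
  have htrans : ∀ {a b c : P}, le a b → le b c → le a c :=
    fun h1 h2 => _root_.trans h1 h2
  have hanti : ∀ {a b : P}, le a b → le b a → a = b :=
    fun h1 h2 => _root_.antisymm h1 h2
  rcases S.eq_empty_or_nonempty with hSe | hSne
  · -- S = ∅
    subst hSe
    have hTne : T.Nonempty := by simpa using hne
    refine ⟨{x | ∃ t ∈ T, le x t}, {x | ∀ a ∈ {x | ∃ t ∈ T, le x t}, le a x ∧ a ≠ x}, ?_, ?_⟩
    · refine ⟨Set.disjoint_left.mpr fun x hx hxC => (hxC x hx).2 rfl, ?_, ?_, ?_⟩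
      · rintro x ⟨t, ht, hxt⟩ y hyx
        exact ⟨t, ht, htrans hyx hxt⟩
      · intro x hx y hxy a ha
        refine ⟨htrans (hx a ha).1 hxy, fun h => (hx a ha).2 ?_⟩
        subst h
        exact hanti (hx a ha).1 hxy
      · intro a ha c hc
        exact hc a ha
    · ext x
      simp only [maxSet, Set.mem_setOf_eq, Set.empty_union]
      constructor
      · intro hmax
        by_cases hxA : x ∈ {x | ∃ t ∈ T, le x t}
        · obtain ⟨t, ht, hxt⟩ := id hxA
          have := hmax t (Or.inl ⟨Or.inl ⟨hxA, ⟨t, ht, hrefl t⟩⟩, hxt⟩)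
          exact this ▸ ht
        · by_cases hxC : x ∈ {x | ∀ a ∈ {x | ∃ t ∈ T, le x t}, le a x ∧ a ≠ x}
          · obtain ⟨t0, ht0⟩ := hTne
            have ht0A : t0 ∈ {x | ∃ t ∈ T, le x t} := ⟨t0, ht0, hrefl t0⟩
            have := hmax t0 (Or.inr (Or.inr (Or.inl ⟨hxC, ht0A⟩)))
            exact absurd this (hxC t0 ht0A).2
          · exfalso
            apply hxC
            intro a ha
            by_cases h1 : le a x
            · exact ⟨h1, fun h => hxA (h ▸ ha)⟩
            · by_cases h2 : le x a
              · obtain ⟨t, ht, hat⟩ := ha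
                exact absurd ⟨t, ht, htrans h2 hat⟩ hxA
              · have := hmax a (Or.inr (Or.inl ⟨hxA, hxC, ha, ⟨h2, h1⟩⟩))
                exact absurd (this ▸ ha) hxA
      · intro hxT y hR
        have hxA : x ∈ {x | ∃ t ∈ T, le x t} := ⟨x, hxT, hrefl x⟩
        have hxC : x ∉ {x | ∀ a ∈ {x | ∃ t ∈ T, le x t}, le a x ∧ a ≠ x} :=
          fun hc => (hc x hxA).2 rfl
        rcases hR with ⟨hblk, hxy⟩ | ⟨h1, _⟩ | ⟨h1, _⟩ | ⟨h1, _⟩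
        · rcases hblk with ⟨_, hyA⟩ | ⟨h1, _⟩ | ⟨h1, _⟩
          · obtain ⟨t', ht', hyt'⟩ := hyA
            have hxt' : le x t' := htrans hxy hyt'
            by_cases hxe : x = t'
            · subst hxe
              exact hanti hyt' hxy
            · exact absurd hxt' (hT x hxT t' ht' hxe).1
          · exact absurd hxA h1
          · exact absurd h1 hxC
        · exact absurd hxA h1
        · exact absurd h1 hxC
        · exact absurd h1 hxC
  · -- S nonempty
    obtain ⟨s0, hs0⟩ := hSne
    refine ⟨{x | ∃ s ∈ S, le x s},
      {x | (∀ s ∈ S, le s x ∧ s ≠ x) ∧ ∀ t ∈ T, ¬ le x t}, ?_, ?_⟩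
    · refine ⟨Set.disjoint_left.mpr ?_, ?_, ?_, ?_⟩
      · rintro x ⟨s, hs, hxs⟩ hxC
        exact (hxC.1 s hs).2 (hanti (hxC.1 s hs).1 hxs)
      · rintro x ⟨s, hs, hxs⟩ y hyx
        exact ⟨s, hs, htrans hyx hxs⟩
      · intro x hx y hxy
        refine ⟨fun s hs => ⟨htrans (hx.1 s hs).1 hxy, fun h => (hx.1 s hs).2 ?_⟩,
          fun t ht hyt => hx.2 t ht (htrans hxy hyt)⟩
        subst h
        exact hanti (hx.1 s hs).1 hxy
      · rintro a ⟨s, hs, has⟩ c hc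
        refine ⟨htrans has (hc.1 s hs).1, fun h => (hc.1 s hs).2 ?_⟩
        subst h
        exact hanti (hc.1 s hs).1 has
    · have hTA : ∀ t ∈ T, t ∉ {x | ∃ s ∈ S, le x s} := by
        rintro t ht ⟨s, hs, hts⟩
        exact (hST s hs t ht).2 (hanti (hST s hs t ht).1 hts)
      have hTC : ∀ t ∈ T, t ∉ {x | (∀ s ∈ S, le s x ∧ s ≠ x) ∧ ∀ t' ∈ T, ¬ le x t'} :=
        fun t ht hc => hc.2 t ht (hrefl t)
      ext x
      simp only [maxSet, Set.mem_setOf_eq, Set.mem_union]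
      constructor
      · intro hmax
        by_cases hxA : x ∈ {x | ∃ s ∈ S, le x s}
        · obtain ⟨s, hs, hxs⟩ := id hxA
          have := hmax s (Or.inl ⟨Or.inl ⟨hxA, ⟨s, hs, hrefl s⟩⟩, hxs⟩)
          exact Or.inl (this ▸ hs)
        · by_cases hxC : x ∈ {x | (∀ s ∈ S, le s x ∧ s ≠ x) ∧ ∀ t ∈ T, ¬ le x t}
          · have hs0A : s0 ∈ {x | ∃ s ∈ S, le x s} := ⟨s0, hs0, hrefl s0⟩
            have := hmax s0 (Or.inr (Or.inr (Or.inl ⟨hxC, hs0A⟩)))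
            exact absurd this (hxC.1 s0 hs0).2
          · have hP1 : ∀ s ∈ S, le s x ∧ s ≠ x := by
              intro s hs
              have hsA : s ∈ {x | ∃ s ∈ S, le x s} := ⟨s, hs, hrefl s⟩
              by_cases h1 : le s x
              · exact ⟨h1, fun h => hxA (h ▸ hsA)⟩
              · by_cases h2 : le x s
                · exact absurd ⟨s, hs, h2⟩ hxA
                · have := hmax s (Or.inr (Or.inl ⟨hxA, hxC, hsA, ⟨h2, h1⟩⟩))
                  exact absurd (this ▸ hsA) hxA
            have hP2 : ∃ t ∈ T, le x t := by
              by_contra hno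
              push_neg at hno
              exact hxC ⟨hP1, hno⟩
            obtain ⟨t, ht, hxt⟩ := hP2
            have := hmax t (Or.inl ⟨Or.inr (Or.inl ⟨hxA, hxC, hTA t ht, hTC t ht⟩), hxt⟩)
            exact Or.inr (this ▸ ht)
      · rintro (hxS | hxT)
        · -- x ∈ S
          have hxA : x ∈ {x | ∃ s ∈ S, le x s} := ⟨x, hxS, hrefl x⟩
          have hxC : x ∉ {x | (∀ s ∈ S, le s x ∧ s ≠ x) ∧ ∀ t ∈ T, ¬ le x t} :=
            fun hc => (hc.1 x hxS).2 rfl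
          intro y hR
          rcases hR with ⟨hblk, hxy⟩ | ⟨h1, _⟩ | ⟨h1, _⟩ | ⟨h1, _⟩
          · rcases hblk with ⟨_, hyA⟩ | ⟨h1, _⟩ | ⟨h1, _⟩
            · obtain ⟨s', hs', hys'⟩ := hyA
              have hxs' : le x s' := htrans hxy hys'
              by_cases hxe : x = s'
              · subst hxe
                exact hanti hys' hxy
              · exact absurd hxs' (hS x hxS s' hs' hxe).1
            · exact absurd hxA h1
            · exact absurd h1 hxC
          · exact absurd hxA h1
          · exact absurd h1 hxC
          · exact absurd h1 hxC
        · -- x ∈ T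
          have hxA := hTA x hxT
          have hxC := hTC x hxT
          intro y hR
          rcases hR with ⟨hblk, hxy⟩ | ⟨_, _, hyA, hinc⟩ | ⟨h1, _⟩ | ⟨h1, _⟩
          · rcases hblk with ⟨h1, _⟩ | ⟨_, _, hyA, hyC⟩ | ⟨h1, _⟩
            · exact absurd h1 hxA
            · by_contra hne'
              apply hyC
              refine ⟨fun s hs => ⟨htrans (hST s hs x hxT).1 hxy, fun h => ?_⟩,
                fun t' ht' hyt' => ?_⟩
              · have hsx : le s x := (hST s hs x hxT).1
                have hxs : x = s := hanti (h.symm ▸ hxy) hsx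
                exact hne' (hxs.trans h).symm
              · have hxt' : le x t' := htrans hxy hyt'
                by_cases hxe : x = t'
                · subst hxe
                  exact hne' (hanti hxy hyt').symm
                · exact absurd hxt' (hT x hxT t' ht' hxe).1
            · exact absurd h1 hxC
          · obtain ⟨s, hs, hys⟩ := hyA
            exact absurd (htrans hys (hST s hs x hxT).1) hinc.2
          · exact absurd h1 hxC
          · exact absurd h1 hxC
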